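/- Suppose p_i : ℂ → ℂ for i = 1,…,n are continuous on the closed right half-plane, analytic in its interior, and there exist ε > 0 and γ > 0 such that Re(p_i(jω)) ≥ ε and |Im(p_i(jω))| ≤ γ for all ω ∈ ℝ (including the limit as |ω| → ∞). Then for T > 0 sufficiently large there exists δ > 0 such that for all i and all ω ∈ ℝ: Re( (jω/(jω + T))·(1 + p_i(jω)/(jω)) ) ≥ δ. Explicitly, it suffices that (Tε + ω(ω − sign(ω)γ))/(ω² + T²) ≥ δ for all ω. -/

import Mathlib

theorem stmt_14 {n : ℕ} (p : Fin n → ℂ → ℂ)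
    (hc : ∀ i, ContinuousOn (p i) {s : ℂ | 0 ≤ s.re})
    (ha : ∀ i, DifferentiableOn ℂ (p i) {s : ℂ | 0 < s.re})
    (ε γ : ℝ) (hε : 0 < ε) (hγ : 0 < γ)
    (hre : ∀ (i : Fin n) (ω : ℝ), ε ≤ (p i (Complex.I * ω)).re)
    (him : ∀ (i : Fin n) (ω : ℝ), |(p i (Complex.I * ω)).im| ≤ γ) :
    ∃ T₀ : ℝ, 0 < T₀ ∧ ∀ T : ℝ, T₀ ≤ T → ∃ δ : ℝ, 0 < δ ∧
      ∀ (i : Fin n) (ω : ℝ), ω ≠ 0 →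
        δ ≤ ((Complex.I * ω / (Complex.I * ω + T)) *
          (1 + p i (Complex.I * ω) / (Complex.I * ω))).re := by
  refine ⟨max (γ^2/ε) ε, lt_max_of_lt_right hε, fun T hT => ?_⟩
  have hTε : ε ≤ T := le_trans (le_max_right _ _) hT
  have hTpos : 0 < T := lt_of_lt_of_le hε hTε
  have hγ2 : γ^2 ≤ T * ε := by
    have := le_trans (le_max_left (γ^2/ε) ε) hT
    calc γ^2 = (γ^2/ε) * ε := by field_simp
    _ ≤ T * ε := by nlinarith
  refine ⟨ε / (2*T), by positivity, fun i ω hω => ?_⟩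
  set z : ℂ := Complex.I * ω with hz
  have hz0 : z ≠ 0 := by
    simp [hz, Complex.ext_iff, Complex.ofReal_ne_zero, hω]
  have hzT : z + T ≠ 0 := by
    intro h
    have : (z + T).re = 0 := by rw [h]; simp
    simp [hz, Complex.add_re, Complex.mul_re] at this
    exact absurd this (ne_of_gt hTpos)
  have heq : (z / (z + T)) * (1 + p i z / z) = (z + p i z) / (z + T) := by
    field_simp
  rw [heq, Complex.div_re]
  set a := (p i z).re with hA
  set b := (p i z).im with hB
  have hzre : z.re = 0 := by simp [hz]
  have hzim : z.im = ω := by simp [hz]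
  have hTre : ((T:ℂ)).re = T := by simp
  have hTim : ((T:ℂ)).im = 0 := by simp
  have hns : Complex.normSq (z + T) = ω^2 + T^2 := by
    simp [Complex.normSq_apply, Complex.add_re, Complex.add_im, hzre, hzim]
    ring
  rw [hns]
  simp only [Complex.add_re, Complex.add_im, hzre, hzim, Complex.ofReal_re,
    Complex.ofReal_im, zero_add, add_zero]
  -- goal: ε/(2T) ≤ ((0+a)*T + (ω+b)*ω)/(ω^2+T^2) roughly
  have ha' : ε ≤ a := hre i ω
  have hb' : |b| ≤ γ := him i ω
  have hωb : -( γ * |ω|) ≤ ω * b := by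
    have : |ω * b| ≤ |ω| * γ := by
      rw [abs_mul]; exact mul_le_mul_of_nonneg_left hb' (abs_nonneg ω)
    nlinarith [neg_abs_le (ω*b)]
  have hden : (0:ℝ) < ω^2 + T^2 := by positivity
  rw [← add_div, div_le_div_iff₀ (by positivity) hden]
  have habs : 2 * γ * |ω| ≤ γ^2 + ω^2 := by nlinarith [sq_nonneg (γ - |ω|), sq_abs ω]
  nlinarith [sq_abs ω, abs_nonneg ω, sq_nonneg ω, mul_le_mul_of_nonneg_left ha' (le_of_lt hTpos)]
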